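/- arXiv:1906.08004 — 4 statements merged into one kernel-verified Lean document; each statement's English description precedes it below -/
import Mathlib

section
/- Let α, β > −1, let −1 < b < 1, and define r_b(n) = (1−b)^{α/2+1/4}(1+b)^{β/2+1/4} p_n^{(α,β)}(b) and R_b(n) = ((1−b)^{α/2+3/4}(1+b)^{β/2+3/4}/(2n+α+β+1)) (p_n^{(α,β)})'(b). Then for every finitely supported sequence f on ℕ and every n ∈ ℕ, T_b f(n) = r_b(n)·H(R_b f)(n) − R_b(n)·H(r_b f)(n) − r_b(n)·Q_{α+β+1}(R_b f)(n) − R_b(n)·Q_{α+β+1}(r_b f)(n) + f(n)·K_b(n,n), where R_b f and r_b f denote the pointwise products m ↦ R_b(m)f(m) and m ↦ r_b(m)f(m). -/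
open MeasureTheory Real Filter

/-- The Jacobi polynomial `P_n^{(a,b)}` defined through Rodrigues' formula. -/
noncomputable def jacobiP (a b : ℝ) (n : ℕ) (x : ℝ) : ℝ :=
  ((-1 : ℝ) ^ n / (2 ^ n * (Nat.factorial n : ℝ))) *
    (1 - x) ^ (-a) * (1 + x) ^ (-b) *
    iteratedDeriv n (fun y : ℝ => (1 - y) ^ (a + (n : ℝ)) * (1 + y) ^ (b + (n : ℝ))) x

/-- The normalizing constant `w_n^{(a,b)}` making the Jacobi polynomials orthonormal. -/
noncomputable def jacobiNorm (a b : ℝ) (n : ℕ) : ℝ :=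
  if n = 0 then
    Real.sqrt (Real.Gamma (a + b + 2) /
      ((2 : ℝ) ^ (a + b + 1) * Real.Gamma (a + 1) * Real.Gamma (b + 1)))
  else
    Real.sqrt ((2 * (n : ℝ) + a + b + 1) * (Nat.factorial n : ℝ) *
        Real.Gamma ((n : ℝ) + a + b + 1) /
      ((2 : ℝ) ^ (a + b + 1) * Real.Gamma ((n : ℝ) + a + 1) * Real.Gamma ((n : ℝ) + b + 1)))

/-- The orthonormal Jacobi polynomial `p_n^{(a,b)}`. -/
noncomputable def pJ (a b : ℝ) (n : ℕ) (x : ℝ) : ℝ := jacobiNorm a b n * jacobiP a b n x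

/-- The kernel `K_{[lo,hi]}(m,n) = ∫_{lo}^{hi} p_m p_n dμ_{a,b}`. -/
noncomputable def jacobiKernel (a b lo hi : ℝ) (m n : ℕ) : ℝ :=
  ∫ x in lo..hi, pJ a b m x * pJ a b n x * ((1 - x) ^ a * (1 + x) ^ b)

/-- The multiplier operator `T_{[lo,hi]} f (n) = ∑_m f(m) K_{[lo,hi]}(m,n)`. -/
noncomputable def jacobiT (a b lo hi : ℝ) (f : ℕ → ℝ) (n : ℕ) : ℝ :=
  ∑' m, f m * jacobiKernel a b lo hi m n

/-- The discrete Hilbert transform `H f (n) = ∑_{m ≠ n} f(m)/(n - m)`. -/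
noncomputable def discHilbert (f : ℕ → ℝ) (n : ℕ) : ℝ :=
  ∑' m, if m = n then 0 else f m / ((n : ℝ) - (m : ℝ))

/-- The operator `Q_a f (n) = ∑_{m ≠ n} f(m)/(n + m + a)`. -/
noncomputable def discQ (a : ℝ) (f : ℕ → ℝ) (n : ℕ) : ℝ :=
  ∑' m, if m = n then 0 else f m / ((n : ℝ) + (m : ℝ) + a)

/-- The sequence `r_b(n)`. -/
noncomputable def rbSeq (a b' b : ℝ) (n : ℕ) : ℝ :=
  (1 - b) ^ (a / 2 + 1 / 4) * (1 + b) ^ (b' / 2 + 1 / 4) * pJ a b' n b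

/-- The sequence `R_b(n)`. -/
noncomputable def RbSeq (a b' b : ℝ) (n : ℕ) : ℝ :=
  (1 - b) ^ (a / 2 + 3 / 4) * (1 + b) ^ (b' / 2 + 3 / 4) / (2 * (n : ℝ) + a + b' + 1) *
    deriv (pJ a b' n) b


open Polynomial

noncomputable def jq (a b : ℝ) (n : ℕ) : ℕ → Polynomial ℝ
  | 0 => 1
  | (k+1) => (1 - X^2) * derivative (jq a b n k)
      + (C (b - a) - C (a + b + 2*n - 2*k) * X) * jq a b n k

lemma jq_succ (a b : ℝ) (n k : ℕ) : jq a b n (k+1) = (1 - X^2) * derivative (jq a b n k)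
      + (C (b - a) - C (a + b + 2*n - 2*k) * X) * jq a b n k := rfl

lemma jq_eval_succ (a b : ℝ) (n k : ℕ) (x : ℝ) :
    eval x (jq a b n (k+1)) = (1 - x^2) * eval x (derivative (jq a b n k))
      + ((b - a) - (a + b + 2*n - 2*k) * x) * eval x (jq a b n k) := by
  rw [jq_succ]; simp

lemma jq_deriv (a b : ℝ) (n : ℕ) : ∀ k : ℕ,
    derivative (jq a b n (k+1)) = C (-((k:ℝ)+1) * (a + b + 2*n - k)) * jq a b n k
  | 0 => by
    apply Polynomial.funext; intro x
    simp [jq]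
  | (k+1) => by
    have ih := jq_deriv a b n k
    apply Polynomial.funext; intro x
    have e2 : jq a b n (k+1+1)
        = (1 - X^2) * (C (-((k:ℝ)+1) * (a + b + 2*n - k)) * jq a b n k)
          + (C (b - a) - C (a + b + 2*(n:ℝ) - 2*(k+1)) * X) * jq a b n (k+1) := by
      rw [jq_succ a b n (k+1), ih]; push_cast; ring
    rw [e2]
    have ihe : eval x (derivative (jq a b n (k+1)))
        = (-((k:ℝ)+1) * (a + b + 2*n - k)) * eval x (jq a b n k) := by
      rw [ih]; simp
    have h1 : (1 - x^2) * eval x (derivative (jq a b n k))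
        = eval x (jq a b n (k+1)) - ((b - a) - (a + b + 2*n - 2*k) * x) * eval x (jq a b n k) := by
      rw [jq_eval_succ]; ring
    simp only [derivative_add, derivative_mul, derivative_sub, derivative_one, derivative_X_pow,
      derivative_C_mul, derivative_C, derivative_X, eval_add, eval_mul, eval_sub, eval_one,
      eval_pow, eval_X, eval_C, eval_neg, eval_natCast, eval_ofNat, mul_one, mul_zero, zero_mul, add_zero, zero_add,
      zero_sub, sub_zero]
    push_cast
    linear_combination (-((k:ℝ)+1) * (a + b + 2*n - k)) * h1
      + ((b - a) - (a + b + 2*(n:ℝ) - 2*(k+1)) * x) * ihe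


open Polynomial

/-- Derivative of `(1-y)^p (1+y)^q P(y)` on `(-1,1)`. -/
lemma hasDerivAt_aux (p q : ℝ) (P : Polynomial ℝ) {x : ℝ} (hx : x ∈ Set.Ioo (-1:ℝ) 1) :
    HasDerivAt (fun y : ℝ => (1-y)^p * (1+y)^q * eval y P)
      ((1-x)^(p-1) * (1+x)^(q-1) *
        eval x ((1 - X^2) * derivative P + (C q * (1 - X) - C p * (1 + X)) * P)) x := by
  obtain ⟨hx1, hx2⟩ := hx
  have h1x : (0:ℝ) < 1 - x := by linarith
  have h2x : (0:ℝ) < 1 + x := by linarith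
  have d1 : HasDerivAt (fun y : ℝ => 1 - y) (-1 : ℝ) x := by
    simpa using (hasDerivAt_id x).const_sub 1
  have d2 : HasDerivAt (fun y : ℝ => 1 + y) (1 : ℝ) x := by
    simpa using (hasDerivAt_id x).const_add 1
  have h1 : HasDerivAt (fun y : ℝ => (1-y)^p) ((-1) * p * (1-x)^(p-1)) x :=
    d1.rpow_const (Or.inl h1x.ne')
  have h2 : HasDerivAt (fun y : ℝ => (1+y)^q) (1 * q * (1+x)^(q-1)) x :=
    d2.rpow_const (Or.inl h2x.ne')
  have h3 : HasDerivAt (fun y : ℝ => eval y P) (eval x (derivative P)) x := P.hasDerivAt x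
  have hp : HasDerivAt (fun y : ℝ => (1-y)^p * (1+y)^q * eval y P) _ x := (h1.mul h2).mul h3
  convert hp using 1
  have e1 : (1-x)^p = (1-x)^(p-1) * (1-x) := by
    rw [← Real.rpow_add_one h1x.ne' (p-1)]; ring_nf
  have e2 : (1+x)^q = (1+x)^(q-1) * (1+x) := by
    rw [← Real.rpow_add_one h2x.ne' (q-1)]; ring_nf
  simp only [eval_add, eval_mul, eval_sub, eval_one, eval_pow, eval_X, eval_C, Pi.mul_apply]
  rw [e1, e2]
  ring

/-- Closed form for iterated derivatives of the Rodrigues kernel on `(-1,1)`. -/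
lemma iteratedDeriv_rodrigues (a b : ℝ) (n : ℕ) (k : ℕ) :
    ∀ x ∈ Set.Ioo (-1:ℝ) 1,
      iteratedDeriv k (fun y : ℝ => (1 - y) ^ (a + (n : ℝ)) * (1 + y) ^ (b + (n : ℝ))) x
        = (1-x)^(a + n - k) * (1+x)^(b + n - k) * eval x (jq a b n k) := by
  induction k with
  | zero =>
    intro x hx
    simp [jq]
  | succ k ih =>
    intro x hx
    have hev : iteratedDeriv k (fun y : ℝ => (1 - y) ^ (a + (n : ℝ)) * (1 + y) ^ (b + (n : ℝ)))
        =ᶠ[nhds x] fun y => (1-y)^(a + n - k) * (1+y)^(b + n - k) * eval y (jq a b n k) := by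
      filter_upwards [isOpen_Ioo.mem_nhds hx] with y hy using ih y hy
    have hd := hasDerivAt_aux (a + n - k) (b + n - k) (jq a b n k) hx
    rw [iteratedDeriv_succ, hev.deriv_eq, hd.deriv]
    have hq : (C ((b:ℝ) + n - k) * (1 - X) - C ((a:ℝ) + n - k) * (1 + X)) * jq a b n k
        = (C (b - a) - C (a + b + 2*(n:ℝ) - 2*k) * X) * jq a b n k := by
      congr 1
      apply Polynomial.funext; intro y
      simp; ring
    have hexp1 : a + (n:ℝ) - k - 1 = a + n - (k+1:ℕ) := by push_cast; ring
    have hexp2 : b + (n:ℝ) - k - 1 = b + n - (k+1:ℕ) := by push_cast; ring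
    rw [hq, hexp1, hexp2, ← jq_succ]

/-- On `(-1,1)`, `pJ` agrees with the polynomial `jphi`. -/
noncomputable def jphi (a b : ℝ) (n : ℕ) : Polynomial ℝ :=
  C (jacobiNorm a b n * ((-1 : ℝ) ^ n / (2 ^ n * (Nat.factorial n : ℝ)))) * jq a b n n

lemma pJ_eq_jphi (a b : ℝ) (n : ℕ) {x : ℝ} (hx : x ∈ Set.Ioo (-1:ℝ) 1) :
    pJ a b n x = eval x (jphi a b n) := by
  obtain ⟨hx1, hx2⟩ := hx
  have h1x : (0:ℝ) < 1 - x := by linarith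
  have h2x : (0:ℝ) < 1 + x := by linarith
  have h := iteratedDeriv_rodrigues a b n n x ⟨hx1, hx2⟩
  have e1 : a + (n:ℝ) - n = a := by ring
  have e2 : b + (n:ℝ) - n = b := by ring
  rw [e1, e2] at h
  unfold pJ jacobiP jphi
  rw [h]
  simp only [eval_mul, eval_C]
  have c1 : (1-x)^(-a) * (1-x)^a = 1 := by
    rw [← Real.rpow_add h1x]; simp
  have c2 : (1+x)^(-b) * (1+x)^b = 1 := by
    rw [← Real.rpow_add h2x]; simp
  linear_combination (jacobiNorm a b n * ((-1 : ℝ) ^ n / (2 ^ n * (Nat.factorial n : ℝ))) *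
      eval x (jq a b n n) * ((1+x)^(-b) * (1+x)^b)) * c1
    + (jacobiNorm a b n * ((-1 : ℝ) ^ n / (2 ^ n * (Nat.factorial n : ℝ))) *
      eval x (jq a b n n)) * c2

lemma jq_ode_eval (a b : ℝ) (n : ℕ) (x : ℝ) :
    (1 - x^2) * eval x (derivative (derivative (jq a b n n)))
      + ((b - a) - (a+b+2) * x) * eval x (derivative (jq a b n n))
      + ((n:ℝ)*((n:ℝ)+a+b+1)) * eval x (jq a b n n) = 0 := by
  have hs : derivative ((1 - X^2) * derivative (jq a b n n)
      + (C (b - a) - C (a + b + 2*(n:ℕ) - 2*(n:ℕ)) * X) * jq a b n n)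
      = C (-((n:ℝ)+1) * (a + b + 2*n - n)) * jq a b n n := by
    rw [← jq_succ, jq_deriv]
  have h := congrArg (eval x) hs
  simp only [derivative_add, derivative_mul, derivative_sub, derivative_one, derivative_X_pow,
    derivative_C_mul, derivative_C, derivative_X, eval_add, eval_mul, eval_sub, eval_one,
    eval_pow, eval_X, eval_C, eval_neg, eval_natCast, eval_ofNat, mul_one, mul_zero, zero_mul,
    add_zero, zero_add, zero_sub, sub_zero] at h
  push_cast at h
  linear_combination h

lemma jphi_ode_eval (a b : ℝ) (m : ℕ) (x : ℝ) :
    (1 - x^2) * eval x (derivative (derivative (jphi a b m)))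
      + ((b - a) - (a+b+2) * x) * eval x (derivative (jphi a b m))
      + ((m:ℝ)*((m:ℝ)+a+b+1)) * eval x (jphi a b m) = 0 := by
  unfold jphi
  simp only [derivative_C_mul, eval_mul, eval_C]
  linear_combination (jacobiNorm a b m * ((-1 : ℝ) ^ m / (2 ^ m * (Nat.factorial m : ℝ)))) *
    jq_ode_eval a b m x

lemma hasDerivAt_G (a b : ℝ) (m n : ℕ) {x : ℝ} (hx : x ∈ Set.Ioo (-1:ℝ) 1) :
    HasDerivAt (fun y : ℝ => (1-y)^(a+1) * (1+y)^(b+1) *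
        eval y (derivative (jphi a b m) * jphi a b n - derivative (jphi a b n) * jphi a b m))
      (((n:ℝ)*((n:ℝ)+a+b+1) - (m:ℝ)*((m:ℝ)+a+b+1)) *
        ((1-x)^a * (1+x)^b * (eval x (jphi a b m) * eval x (jphi a b n)))) x := by
  have hd := hasDerivAt_aux (a+1) (b+1)
    (derivative (jphi a b m) * jphi a b n - derivative (jphi a b n) * jphi a b m) hx
  convert hd using 1
  have e1 : a + 1 - 1 = a := by ring
  have e2 : b + 1 - 1 = b := by ring
  rw [e1, e2]
  simp only [derivative_sub, derivative_mul, eval_add, eval_mul, eval_sub, eval_one,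
    eval_pow, eval_X, eval_C]
  linear_combination ((1-x)^a * (1+x)^b * eval x (jphi a b m)) * jphi_ode_eval a b n x
    - ((1-x)^a * (1+x)^b * eval x (jphi a b n)) * jphi_ode_eval a b m x

lemma kernel_apply (a b : ℝ) (hb : -1 < b) {t : ℝ} (ht1 : -1 < t) (ht2 : t < 1) (m n : ℕ) :
    ((n:ℝ)*((n:ℝ)+a+b+1) - (m:ℝ)*((m:ℝ)+a+b+1)) * jacobiKernel a b (-1) t m n
      = (1-t)^(a+1) * (1+t)^(b+1) *
        eval t (derivative (jphi a b m) * jphi a b n - derivative (jphi a b n) * jphi a b m) := by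
  set lam : ℝ := (n:ℝ)*((n:ℝ)+a+b+1) - (m:ℝ)*((m:ℝ)+a+b+1) with hlam
  have hstep1 : jacobiKernel a b (-1) t m n
      = ∫ x in (-1:ℝ)..t, (1-x)^a * (1+x)^b * (eval x (jphi a b m) * eval x (jphi a b n)) := by
    unfold jacobiKernel
    apply intervalIntegral.integral_congr_ae
    apply MeasureTheory.ae_of_all
    intro x hx
    rw [Set.uIoc_of_le (by linarith : (-1:ℝ) ≤ t)] at hx
    have hxIoo : x ∈ Set.Ioo (-1:ℝ) 1 := ⟨hx.1, lt_of_le_of_lt hx.2 ht2⟩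
    rw [pJ_eq_jphi a b m hxIoo, pJ_eq_jphi a b n hxIoo]
    ring
  rw [hstep1, ← intervalIntegral.integral_const_mul]
  have hFTC := intervalIntegral.integral_eq_sub_of_hasDeriv_right_of_le
    (f := fun y : ℝ => (1-y)^(a+1) * (1+y)^(b+1) *
      eval y (derivative (jphi a b m) * jphi a b n - derivative (jphi a b n) * jphi a b m))
    (f' := fun x : ℝ => lam * ((1-x)^a * (1+x)^b * (eval x (jphi a b m) * eval x (jphi a b n))))
    (le_of_lt ht1) ?_ ?_ ?_
  · rw [hFTC]
    have hzero : ((1:ℝ) + (-1))^(b+1) = 0 := by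
      norm_num
      exact Real.zero_rpow (by linarith)
    simp only [hzero, mul_zero, zero_mul, sub_zero]
  · -- continuity on Icc
    apply ContinuousOn.mul
    apply ContinuousOn.mul
    · apply ContinuousOn.rpow_const (Continuous.continuousOn (by continuity))
      intro x hx
      left
      have : x ≤ t := hx.2
      have : (0:ℝ) < 1 - x := by linarith
      linarith
    · apply ContinuousOn.rpow_const (Continuous.continuousOn (by continuity))
      intro x hx
      right
      linarith
    · exact (Polynomial.continuous _).continuousOn
  · intro x hx
    exact (hasDerivAt_G a b m n ⟨hx.1, lt_trans hx.2 ht2⟩).hasDerivWithinAt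
  · -- interval integrability
    have hbase : IntervalIntegrable (fun x : ℝ => (x + 1)^b) MeasureTheory.volume (-1) t := by
      have h0 := intervalIntegral.intervalIntegrable_rpow' (a := 0) (b := t + 1) hb
      have := h0.comp_add_right 1
      simpa using this
    have hcont : ContinuousOn (fun x : ℝ => lam * (1-x)^a *
        (eval x (jphi a b m) * eval x (jphi a b n))) (Set.uIcc (-1) t) := by
      apply ContinuousOn.mul
      · apply ContinuousOn.mul continuousOn_const
        apply ContinuousOn.rpow_const (Continuous.continuousOn (by continuity))
        intro x hx
        left
        rw [Set.uIcc_of_le (by linarith : (-1:ℝ) ≤ t)] at hx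
        have : x ≤ t := hx.2
        linarith
      · exact ((Polynomial.continuous _).mul (Polynomial.continuous _)).continuousOn
    have hint := hbase.mul_continuousOn hcont
    have heq : (fun x : ℝ => (x + 1)^b * (lam * (1-x)^a *
        (eval x (jphi a b m) * eval x (jphi a b n))))
        = fun x : ℝ => lam * ((1-x)^a * (1+x)^b * (eval x (jphi a b m) * eval x (jphi a b n))) := by
      funext x
      rw [add_comm x 1]
      ring
    rwa [heq] at hint

lemma deriv_pJ_eq (a b : ℝ) (n : ℕ) {x : ℝ} (hx : x ∈ Set.Ioo (-1:ℝ) 1) :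
    deriv (pJ a b n) x = eval x (derivative (jphi a b n)) := by
  have hev : pJ a b n =ᶠ[nhds x] fun y => eval y (jphi a b n) := by
    filter_upwards [isOpen_Ioo.mem_nhds hx] with y hy using pJ_eq_jphi a b n hy
  rw [hev.deriv_eq, Polynomial.deriv]

lemma jphi_deriv_zero (a b : ℝ) : derivative (jphi a b 0) = 0 := by
  unfold jphi
  rw [show jq a b 0 0 = 1 from rfl]
  simp

lemma key_term (α β : ℝ) (hα : -1 < α) (hβ : -1 < β) {b : ℝ} (hb1 : -1 < b) (hb2 : b < 1)
    (m n : ℕ) (hmn : m ≠ n) (v : ℝ) :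
    v * jacobiKernel α β (-1) b m n =
      rbSeq α β b n * (RbSeq α β b m * v / ((n:ℝ) - (m:ℝ)))
      - RbSeq α β b n * (rbSeq α β b m * v / ((n:ℝ) - (m:ℝ)))
      - rbSeq α β b n * (RbSeq α β b m * v / ((n:ℝ) + (m:ℝ) + (α+β+1)))
      - RbSeq α β b n * (rbSeq α β b m * v / ((n:ℝ) + (m:ℝ) + (α+β+1))) := by
  have h1mb : (0:ℝ) < 1 - b := by linarith
  have h1pb : (0:ℝ) < 1 + b := by linarith
  have hbI : b ∈ Set.Ioo (-1:ℝ) 1 := ⟨hb1, hb2⟩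
  have hd1 : (n:ℝ) - (m:ℝ) ≠ 0 := sub_ne_zero_of_ne (by exact_mod_cast Ne.symm hmn)
  have hd2 : (0:ℝ) < (n:ℝ) + (m:ℝ) + (α+β+1) := by
    have h1 : (1:ℝ) ≤ (n:ℝ) + (m:ℝ) := by
      have : 1 ≤ n + m := by omega
      exact_mod_cast this
    linarith
  have hd2' : (n:ℝ) + (m:ℝ) + (α+β+1) ≠ 0 := hd2.ne'
  have hsplit : ∀ k : ℕ, RbSeq α β b k * (2*(k:ℝ) + (α+β+1))
      = (1-b)^(α/2+3/4) * (1+b)^(β/2+3/4) * eval b (derivative (jphi α β k)) := by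
    intro k
    unfold RbSeq
    rw [deriv_pJ_eq α β k hbI]
    by_cases hk : 2*(k:ℝ) + (α+β+1) = 0
    · have hk0 : k = 0 := by
        by_contra hne
        have : (1:ℝ) ≤ (k:ℝ) := by exact_mod_cast Nat.one_le_iff_ne_zero.mpr hne
        linarith
      subst hk0
      rw [jphi_deriv_zero]
      simp [hk]
    · have hne : 2*(k:ℝ) + α + β + 1 ≠ 0 := by
        intro h; exact hk (by linarith [h])
      rw [show 2*(k:ℝ) + (α+β+1) = 2*(k:ℝ) + α + β + 1 from by ring,
        div_mul_eq_mul_div, div_mul_eq_mul_div, mul_div_assoc,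
        div_self hne, mul_one]
  have hm' : RbSeq α β b m / ((n:ℝ)-(m:ℝ)) - RbSeq α β b m / ((n:ℝ)+(m:ℝ)+(α+β+1))
      = (1-b)^(α/2+3/4) * (1+b)^(β/2+3/4) * eval b (derivative (jphi α β m))
        / (((n:ℝ)-(m:ℝ)) * ((n:ℝ)+(m:ℝ)+(α+β+1))) := by
    rw [← hsplit m]
    field_simp
    ring
  have hn' : RbSeq α β b n / ((n:ℝ)-(m:ℝ)) + RbSeq α β b n / ((n:ℝ)+(m:ℝ)+(α+β+1))
      = (1-b)^(α/2+3/4) * (1+b)^(β/2+3/4) * eval b (derivative (jphi α β n))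
        / (((n:ℝ)-(m:ℝ)) * ((n:ℝ)+(m:ℝ)+(α+β+1))) := by
    rw [← hsplit n]
    field_simp
    ring
  have hKa := kernel_apply α β hβ hb1 hb2 m n
  simp only [eval_sub, eval_mul] at hKa
  have hlam : ((n:ℝ)*((n:ℝ)+α+β+1) - (m:ℝ)*((m:ℝ)+α+β+1))
      = ((n:ℝ)-(m:ℝ)) * ((n:ℝ)+(m:ℝ)+(α+β+1)) := by ring
  rw [hlam] at hKa
  have hK : jacobiKernel α β (-1) b m n
      = (1-b)^(α+1) * (1+b)^(β+1) *
        (eval b (derivative (jphi α β m)) * eval b (jphi α β n)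
          - eval b (derivative (jphi α β n)) * eval b (jphi α β m))
        / (((n:ℝ)-(m:ℝ)) * ((n:ℝ)+(m:ℝ)+(α+β+1))) := by
    rw [eq_div_iff (mul_ne_zero hd1 hd2')]
    linear_combination hKa
  have hcc : ((1-b)^(α/2+(1:ℝ)/4) * (1+b)^(β/2+(1:ℝ)/4)) * ((1-b)^(α/2+(3:ℝ)/4) * (1+b)^(β/2+(3:ℝ)/4))
      = (1-b)^(α+1) * (1+b)^(β+1) := by
    rw [mul_mul_mul_comm, ← Real.rpow_add h1mb, ← Real.rpow_add h1pb,
      show α/2+(1:ℝ)/4+(α/2+(3:ℝ)/4) = α+1 from by ring,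
      show β/2+(1:ℝ)/4+(β/2+(3:ℝ)/4) = β+1 from by ring]
  have hrbn : rbSeq α β b n = (1-b)^(α/2+1/4) * (1+b)^(β/2+1/4) * eval b (jphi α β n) := by
    unfold rbSeq; rw [pJ_eq_jphi α β n hbI]
  have hrbm : rbSeq α β b m = (1-b)^(α/2+1/4) * (1+b)^(β/2+1/4) * eval b (jphi α β m) := by
    unfold rbSeq; rw [pJ_eq_jphi α β m hbI]
  rw [hK, hrbn, hrbm]
  linear_combination
    - (v * ((1-b)^(α/2+(1:ℝ)/4) * (1+b)^(β/2+(1:ℝ)/4) * eval b (jphi α β n))) * hm'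
    + (v * ((1-b)^(α/2+(1:ℝ)/4) * (1+b)^(β/2+(1:ℝ)/4) * eval b (jphi α β m))) * hn'
    - (v * (eval b (derivative (jphi α β m)) * eval b (jphi α β n)
        - eval b (derivative (jphi α β n)) * eval b (jphi α β m))
        / (((n:ℝ)-(m:ℝ)) * ((n:ℝ)+(m:ℝ)+(α+β+1)))) * hcc

theorem jacobi_multiplier_decomposition
    (α β : ℝ) (hα : -1 < α) (hβ : -1 < β) (b : ℝ) (hb1 : -1 < b) (hb2 : b < 1)
    (f : ℕ → ℝ) (hf : (Function.support f).Finite) (n : ℕ) :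
    jacobiT α β (-1) b f n =
      rbSeq α β b n * discHilbert (fun m => RbSeq α β b m * f m) n -
        RbSeq α β b n * discHilbert (fun m => rbSeq α β b m * f m) n -
        rbSeq α β b n * discQ (α + β + 1) (fun m => RbSeq α β b m * f m) n -
        RbSeq α β b n * discQ (α + β + 1) (fun m => rbSeq α β b m * f m) n +
        f n * jacobiKernel α β (-1) b n n := by
  classical
  set s : Finset ℕ := hf.toFinset ∪ {n} with hs
  have hns : n ∈ s := Finset.mem_union_right _ (Finset.mem_singleton_self n)
  have hsupp : ∀ m, m ∉ s → f m = 0 := by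
    intro m hm
    by_contra h
    exact hm (Finset.mem_union_left _ (hf.mem_toFinset.mpr h))
  have hT : jacobiT α β (-1) b f n = ∑ m ∈ s, f m * jacobiKernel α β (-1) b m n := by
    unfold jacobiT
    exact tsum_eq_sum (fun m hm => by rw [hsupp m hm, zero_mul])
  have hH1 : discHilbert (fun m => RbSeq α β b m * f m) n
      = ∑ m ∈ s, (if m = n then 0 else RbSeq α β b m * f m / ((n:ℝ) - (m:ℝ))) := by
    unfold discHilbert
    exact tsum_eq_sum (fun m hm => by simp [hsupp m hm])
  have hH2 : discHilbert (fun m => rbSeq α β b m * f m) n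
      = ∑ m ∈ s, (if m = n then 0 else rbSeq α β b m * f m / ((n:ℝ) - (m:ℝ))) := by
    unfold discHilbert
    exact tsum_eq_sum (fun m hm => by simp [hsupp m hm])
  have hQ1 : discQ (α + β + 1) (fun m => RbSeq α β b m * f m) n
      = ∑ m ∈ s, (if m = n then 0 else RbSeq α β b m * f m / ((n:ℝ) + (m:ℝ) + (α+β+1))) := by
    unfold discQ
    exact tsum_eq_sum (fun m hm => by simp [hsupp m hm])
  have hQ2 : discQ (α + β + 1) (fun m => rbSeq α β b m * f m) n
      = ∑ m ∈ s, (if m = n then 0 else rbSeq α β b m * f m / ((n:ℝ) + (m:ℝ) + (α+β+1))) := by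
    unfold discQ
    exact tsum_eq_sum (fun m hm => by simp [hsupp m hm])
  have hdiag : f n * jacobiKernel α β (-1) b n n
      = ∑ m ∈ s, (if m = n then f m * jacobiKernel α β (-1) b m n else 0) := by
    rw [Finset.sum_ite_eq' s n]
    simp [hns]
  rw [hT, hH1, hH2, hQ1, hQ2, hdiag, Finset.mul_sum, Finset.mul_sum, Finset.mul_sum,
    Finset.mul_sum, ← Finset.sum_sub_distrib, ← Finset.sum_sub_distrib, ← Finset.sum_sub_distrib,
    ← Finset.sum_add_distrib]
  apply Finset.sum_congr rfl
  intro m _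
  by_cases hmn : m = n
  · subst hmn
    simp
  · simp only [if_neg hmn]
    rw [add_zero]
    exact key_term α β hα hβ hb1 hb2 m n hmn (f m)
end

section
/- Let a ≥ 0. Then there exists a constant C > 0, depending only on a, such that for every sequence f on ℕ for which the relevant series converge and every n ∈ ℕ, |Q_a f(n)| ≤ C (O₁f(n) + O₂f(n)). -/
open MeasureTheory Real Filter

/-- The discrete Hardy operator `O₁ f (n) = (n+1)⁻¹ ∑_{m ≤ n} |f(m)|`. -/
noncomputable def hardyO1 (f : ℕ → ℝ) (n : ℕ) : ℝ :=
  (∑ m ∈ Finset.range (n + 1), |f m|) / ((n : ℝ) + 1)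

/-- The adjoint discrete Hardy operator `O₂ f (n) = ∑_{m ≥ n} |f(m)|/(m+1)`. -/
noncomputable def hardyO2 (f : ℕ → ℝ) (n : ℕ) : ℝ :=
  ∑' m, if n ≤ m then |f m| / ((m : ℝ) + 1) else 0

theorem discQ_le_hardy
    (a : ℝ) (ha : 0 ≤ a) :
    ∃ C : ℝ, 0 < C ∧ ∀ f : ℕ → ℝ,
      Summable (fun m => |f m| / ((m : ℝ) + 1)) →
      ∀ n : ℕ, |discQ a f n| ≤ C * (hardyO1 f n + hardyO2 f n) := by
  refine ⟨2, two_pos, fun f hf n => ?_⟩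
  set g : ℕ → ℝ := fun m => if m = n then 0 else f m / ((n : ℝ) + (m : ℝ) + a) with hg
  set A : ℕ → ℝ := fun m => if m < n then |f m| / ((n : ℝ) + 1) else 0 with hA
  set B : ℕ → ℝ := fun m => if n < m then |f m| / ((m : ℝ) + 1) else 0 with hB
  set T : ℕ → ℝ := fun m => 2 * (A m + B m) with hT
  -- pointwise bound |g m| ≤ T m
  have key : ∀ m : ℕ, |g m| ≤ T m := by
    intro m
    have hAB0 : ∀ m, 0 ≤ A m := by
      intro m; simp only [hA]; positivity
    have hBB0 : ∀ m, 0 ≤ B m := by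
      intro m; simp only [hB]; positivity
    rcases lt_trichotomy m n with h | h | h
    · -- m < n, so n ≥ 1 and n + m + a ≥ (n+1)/2
      have hn1 : (1:ℝ) ≤ (n:ℝ) := by exact_mod_cast Nat.one_le_iff_ne_zero.mpr (by omega)
      have hm0 : (0:ℝ) ≤ (m:ℝ) := Nat.cast_nonneg m
      have hne : m ≠ n := Nat.ne_of_lt h
      have hgm : |g m| = |f m| / ((n : ℝ) + (m : ℝ) + a) := by
        simp only [hg, if_neg hne, abs_div, abs_of_pos (by linarith : (0:ℝ) < (n:ℝ) + m + a)]
      have hden : ((n:ℝ) + 1) / 2 ≤ (n:ℝ) + m + a := by linarith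
      have : |f m| / ((n : ℝ) + (m : ℝ) + a) ≤ |f m| / (((n:ℝ) + 1) / 2) :=
        div_le_div_of_nonneg_left (abs_nonneg _) (by linarith) hden
      have heq : |f m| / (((n:ℝ) + 1) / 2) = 2 * (|f m| / ((n:ℝ) + 1)) := by
        field_simp
      rw [hgm]
      calc |f m| / ((n : ℝ) + (m : ℝ) + a) ≤ 2 * (|f m| / ((n:ℝ) + 1)) := by
            rw [← heq]; exact this
        _ ≤ T m := by
            simp only [hT, hA, hB, if_pos h, if_neg (by omega : ¬ n < m)]
            linarith
    · simp only [hg, hT, if_pos h]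
      have := hAB0 m; have := hBB0 m
      simp; linarith
    · -- n < m, so m ≥ 1 and n + m + a ≥ (m+1)/2
      have hm1 : (1:ℝ) ≤ (m:ℝ) := by exact_mod_cast Nat.one_le_iff_ne_zero.mpr (by omega)
      have hn0 : (0:ℝ) ≤ (n:ℝ) := Nat.cast_nonneg n
      have hne : m ≠ n := Nat.ne_of_gt h
      have hgm : |g m| = |f m| / ((n : ℝ) + (m : ℝ) + a) := by
        simp only [hg, if_neg hne, abs_div, abs_of_pos (by linarith : (0:ℝ) < (n:ℝ) + m + a)]
      have hden : ((m:ℝ) + 1) / 2 ≤ (n:ℝ) + m + a := by linarith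
      have : |f m| / ((n : ℝ) + (m : ℝ) + a) ≤ |f m| / (((m:ℝ) + 1) / 2) :=
        div_le_div_of_nonneg_left (abs_nonneg _) (by linarith) hden
      have heq : |f m| / (((m:ℝ) + 1) / 2) = 2 * (|f m| / ((m:ℝ) + 1)) := by
        field_simp
      rw [hgm]
      calc |f m| / ((n : ℝ) + (m : ℝ) + a) ≤ 2 * (|f m| / ((m:ℝ) + 1)) := by
            rw [← heq]; exact this
        _ ≤ T m := by
            simp only [hT, hA, hB, if_pos h, if_neg (by omega : ¬ m < n)]
            linarith
  -- summability facts
  have hA_sum : Summable A := by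
    apply summable_of_ne_finset_zero (s := Finset.range n)
    intro m hm
    have : ¬ m < n := by simp only [Finset.mem_range] at hm; omega
    simp only [hA, if_neg this]
  have hB_sum : Summable B := by
    apply Summable.of_nonneg_of_le (fun m => by simp only [hB]; positivity)
      (fun m => ?_) hf
    by_cases h : n < m
    · simp only [hB, if_pos h]; exact le_refl _
    · simp only [hB, if_neg h]; positivity
  have hT_sum : Summable T := by
    simpa [hT] using ((hA_sum.add hB_sum).mul_left 2)
  have habs_sum : Summable (fun m => |g m|) :=
    Summable.of_nonneg_of_le (fun m => abs_nonneg _) key hT_sum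
  have hg_sum : Summable g := habs_sum.of_abs
  -- main chain
  have h1 : |discQ a f n| ≤ ∑' m, |g m| := by
    have hd : discQ a f n = ∑' m, g m := rfl
    rw [hd]
    have := norm_tsum_le_tsum_norm (f := g)
      (by simpa only [Real.norm_eq_abs] using habs_sum)
    simpa only [Real.norm_eq_abs] using this
  have h2 : ∑' m, |g m| ≤ ∑' m, T m := Summable.tsum_le_tsum key habs_sum hT_sum
  have hAeq : ∑' m, A m ≤ hardyO1 f n := by
    have hstep : ∑' m, A m = ∑ m ∈ Finset.range n, A m := by
      apply tsum_eq_sum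
      intro m hm
      have : ¬ m < n := by simp only [Finset.mem_range] at hm; omega
      simp only [hA, if_neg this]
    have : ∑' m, A m = ∑ m ∈ Finset.range n, |f m| / ((n:ℝ) + 1) := by
      rw [hstep]
      refine Finset.sum_congr rfl fun m hm => ?_
      have : m < n := Finset.mem_range.mp hm
      simp only [hA, if_pos this]
    rw [this, ← Finset.sum_div]
    apply div_le_div_of_nonneg_right ?_ (by positivity)
    · exact Finset.sum_le_sum_of_subset_of_nonneg
        (Finset.range_subset_range.mpr (Nat.le_succ n)) (fun i _ _ => abs_nonneg _)
  have hBeq : ∑' m, B m ≤ hardyO2 f n := by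
    unfold hardyO2
    apply Summable.tsum_le_tsum ?_ hB_sum
    · apply Summable.of_nonneg_of_le (fun m => by positivity) (fun m => ?_) hf
      by_cases h : n ≤ m
      · simp only [if_pos h]; exact le_refl _
      · simp only [if_neg h]; positivity
    · intro m
      by_cases h : n < m
      · simp only [hB, if_pos h, if_pos h.le]; exact le_refl _
      · simp only [hB, if_neg h]
        by_cases h' : n ≤ m
        · simp only [if_pos h']; positivity
        · simp only [if_neg h']; exact le_refl 0
  have h3 : ∑' m, T m = 2 * (∑' m, A m + ∑' m, B m) := by
    rw [hT, tsum_mul_left, Summable.tsum_add hA_sum hB_sum]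
  calc |discQ a f n| ≤ ∑' m, T m := h1.trans h2
    _ = 2 * (∑' m, A m + ∑' m, B m) := h3
    _ ≤ 2 * (hardyO1 f n + hardyO2 f n) := by
        have := hAeq; have := hBeq; linarith
end

section
/- Let a ≥ 0 and w ∈ A_1(ℕ). Then there exists a constant C > 0, depending only on a and the A_1(ℕ) constant of w, such that ‖Q_a f‖_{ℓ^{1,∞}(ℕ,w)} ≤ C ‖f‖_{ℓ^1(ℕ,w)} for every f ∈ ℓ^1(ℕ,w). -/
open MeasureTheory Real Filter

/-- The discrete Muckenhoupt `A_1(ℕ)` condition with `A_1(ℕ)` constant at most `A`. -/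
def A1ConstLE (w : ℕ → ℝ) (A : ℝ) : Prop :=
  ∀ n m : ℕ, n ≤ m → ∀ k : ℕ, n ≤ k → k ≤ m →
    (∑ j ∈ Finset.Icc n m, w j) * (w k)⁻¹ ≤ A * ((m : ℝ) - (n : ℝ) + 1)

theorem discQ_weighted_weak_type
    (a : ℝ) (ha : 0 ≤ a) (Λ : ℝ) (hΛ : 0 < Λ) :
    ∃ C : ℝ, 0 < C ∧ ∀ w : ℕ → ℝ, (∀ n, 0 < w n) → A1ConstLE w Λ →
      ∀ f : ℕ → ℝ, Summable (fun m => |f m| * w m) →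
        (∀ n : ℕ, Summable (fun m : ℕ =>
          if m = n then 0 else |f m| / ((n : ℝ) + (m : ℝ) + a))) ∧
        ∀ t : ℝ, 0 < t →
          ENNReal.ofReal t *
              ∑' n, (if t < |discQ a f n| then ENNReal.ofReal (w n) else 0) ≤
            ENNReal.ofReal (C * ∑' m, |f m| * w m) := by
  classical
  refine ⟨2 * Λ, by positivity, ?_⟩
  intro w hw hA1 f hf
  have hw0 : 0 < w 0 := hw 0
  -- positivity of the denominators off the diagonal
  have hden : ∀ n m : ℕ, m ≠ n → (0 : ℝ) < (n : ℝ) + (m : ℝ) + a := by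
    intro n m hmn
    have h1 : 1 ≤ n + m := by omega
    have h1' : (1 : ℝ) ≤ (n : ℝ) + (m : ℝ) := by exact_mod_cast h1
    linarith
  -- the A1 inequality on [0, M], cleared of the inverse
  have hA1' : ∀ M k : ℕ, k ≤ M →
      (∑ j ∈ Finset.Icc 0 M, w j) ≤ Λ * ((M : ℝ) + 1) * w k := by
    intro M k hk
    have h := hA1 0 M (Nat.zero_le M) k (Nat.zero_le k) hk
    have hwk := hw k
    have h' := mul_le_mul_of_nonneg_right h hwk.le
    rw [mul_assoc, inv_mul_cancel₀ hwk.ne', mul_one] at h'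
    calc (∑ j ∈ Finset.Icc 0 M, w j)
        ≤ Λ * ((M : ℝ) - ((0 : ℕ) : ℝ) + 1) * w k := h'
      _ = Λ * ((M : ℝ) + 1) * w k := by norm_num
  -- key kernel estimate
  have hW : ∀ n m : ℕ, m ≠ n →
      (∑ j ∈ Finset.Icc 0 n, w j) / ((n : ℝ) + (m : ℝ) + a) ≤ 2 * Λ * w m := by
    intro n m hmn
    set M := max n m with hM
    have h1 : (∑ j ∈ Finset.Icc 0 n, w j) ≤ ∑ j ∈ Finset.Icc 0 M, w j := by
      apply Finset.sum_le_sum_of_subset_of_nonneg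
      · apply Finset.Icc_subset_Icc le_rfl (le_max_left n m)
      · intro j _ _; exact (hw j).le
    have h2 : (∑ j ∈ Finset.Icc 0 M, w j) ≤ Λ * ((M : ℝ) + 1) * w m :=
      hA1' M m (le_max_right n m)
    have h3 : (M : ℝ) + 1 ≤ 2 * ((n : ℝ) + (m : ℝ) + a) := by
      have hMle : M ≤ n + m := by omega
      have h1nm : 1 ≤ n + m := by omega
      have hMle' : (M : ℝ) ≤ (n : ℝ) + (m : ℝ) := by exact_mod_cast hMle
      have h1nm' : (1 : ℝ) ≤ (n : ℝ) + (m : ℝ) := by exact_mod_cast h1nm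
      linarith
    rw [div_le_iff₀ (hden n m hmn)]
    have h4 : Λ * ((M : ℝ) + 1) * w m ≤ Λ * (2 * ((n : ℝ) + (m : ℝ) + a)) * w m := by
      have := mul_le_mul_of_nonneg_left h3 hΛ.le
      exact mul_le_mul_of_nonneg_right this (hw m).le
    calc (∑ j ∈ Finset.Icc 0 n, w j) ≤ Λ * ((M : ℝ) + 1) * w m := le_trans h1 h2
      _ ≤ Λ * (2 * ((n : ℝ) + (m : ℝ) + a)) * w m := h4
      _ = 2 * Λ * w m * ((n : ℝ) + (m : ℝ) + a) := by ring
  -- inverse kernel estimate (for summability)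
  have hinv : ∀ n m : ℕ, m ≠ n →
      ((n : ℝ) + (m : ℝ) + a)⁻¹ ≤ 2 * Λ * w m / w 0 := by
    intro n m hmn
    have hd := hden n m hmn
    have hw0sum : w 0 ≤ ∑ j ∈ Finset.Icc 0 n, w j :=
      Finset.single_le_sum (fun j _ => (hw j).le) (by simp)
    have hle : w 0 / ((n : ℝ) + (m : ℝ) + a) ≤
        (∑ j ∈ Finset.Icc 0 n, w j) / ((n : ℝ) + (m : ℝ) + a) :=
      div_le_div_of_nonneg_right hw0sum hd.le
    have h1 : w 0 / ((n : ℝ) + (m : ℝ) + a) ≤ 2 * Λ * w m :=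
      le_trans hle (hW n m hmn)
    rw [inv_eq_one_div, div_le_div_iff₀ hd hw0]
    rw [div_le_iff₀ hd] at h1
    linarith
  -- summability
  have hsummable : ∀ n : ℕ, Summable (fun m : ℕ =>
      if m = n then 0 else |f m| / ((n : ℝ) + (m : ℝ) + a)) := by
    intro n
    refine Summable.of_nonneg_of_le ?_ ?_
      (hf.mul_left (2 * Λ / w 0))
    · intro m
      split_ifs with h
      · exact le_rfl
      · exact div_nonneg (abs_nonneg _) (hden n m h).le
    · intro m
      split_ifs with h
      · exact mul_nonneg (div_nonneg (by positivity) hw0.le)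
          (mul_nonneg (abs_nonneg _) (hw m).le)
      · have h1 := hinv n m h
        calc |f m| / ((n : ℝ) + (m : ℝ) + a)
            = |f m| * ((n : ℝ) + (m : ℝ) + a)⁻¹ := div_eq_mul_inv _ _
          _ ≤ |f m| * (2 * Λ * w m / w 0) :=
              mul_le_mul_of_nonneg_left h1 (abs_nonneg _)
          _ = (2 * Λ / w 0) * (|f m| * w m) := by ring
  refine ⟨hsummable, ?_⟩
  -- pointwise triangle inequality
  have habs : ∀ n : ℕ, |discQ a f n| ≤
      ∑' m, (if m = n then 0 else |f m| / ((n : ℝ) + (m : ℝ) + a)) := by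
    intro n
    have hnormeq : (fun m : ℕ => ‖if m = n then 0 else f m / ((n : ℝ) + (m : ℝ) + a)‖)
        = fun m : ℕ => if m = n then 0 else |f m| / ((n : ℝ) + (m : ℝ) + a) := by
      funext m
      split_ifs with h
      · simp
      · rw [Real.norm_eq_abs, abs_div, abs_of_pos (hden n m h)]
    have hs : Summable (fun m : ℕ =>
        ‖if m = n then 0 else f m / ((n : ℝ) + (m : ℝ) + a)‖) := by
      rw [hnormeq]; exact hsummable n
    have := norm_tsum_le_tsum_norm hs
    rw [hnormeq] at this
    simpa [discQ, Real.norm_eq_abs] using this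
  set F := ∑' m, |f m| * w m with hF
  have hFnn : 0 ≤ F := tsum_nonneg fun m => mul_nonneg (abs_nonneg _) (hw m).le
  intro t ht
  -- key level-set estimate
  have hkey : ∀ n : ℕ, t < |discQ a f n| →
      t * (∑ j ∈ Finset.Icc 0 n, w j) ≤ 2 * Λ * F := by
    intro n hn
    set W := ∑ j ∈ Finset.Icc 0 n, w j with hWdef
    have hWnn : 0 ≤ W := Finset.sum_nonneg fun j _ => (hw j).le
    have hterm : ∀ m : ℕ,
        (if m = n then 0 else |f m| / ((n : ℝ) + (m : ℝ) + a)) * W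
          ≤ 2 * Λ * (|f m| * w m) := by
      intro m
      split_ifs with h
      · rw [zero_mul]
        exact mul_nonneg (by positivity) (mul_nonneg (abs_nonneg _) (hw m).le)
      · have h1 := hW n m h
        calc |f m| / ((n : ℝ) + (m : ℝ) + a) * W
            = |f m| * (W / ((n : ℝ) + (m : ℝ) + a)) := by ring
          _ ≤ |f m| * (2 * Λ * w m) := mul_le_mul_of_nonneg_left h1 (abs_nonneg _)
          _ = 2 * Λ * (|f m| * w m) := by ring
    have hsum1 : Summable (fun m : ℕ =>
        (if m = n then 0 else |f m| / ((n : ℝ) + (m : ℝ) + a)) * W) :=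
      (hsummable n).mul_right W
    have hsum2 : Summable (fun m : ℕ => 2 * Λ * (|f m| * w m)) := hf.mul_left _
    have h2 : (∑' m, (if m = n then 0 else |f m| / ((n : ℝ) + (m : ℝ) + a))) * W
        ≤ 2 * Λ * F := by
      rw [← tsum_mul_right, hF, ← tsum_mul_left]
      exact Summable.tsum_le_tsum hterm hsum1 hsum2
    calc t * W ≤ |discQ a f n| * W := mul_le_mul_of_nonneg_right hn.le hWnn
      _ ≤ (∑' m, (if m = n then 0 else |f m| / ((n : ℝ) + (m : ℝ) + a))) * W :=
          mul_le_mul_of_nonneg_right (habs n) hWnn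
      _ ≤ 2 * Λ * F := h2
  -- pass to ENNReal
  rw [ENNReal.tsum_eq_iSup_sum, ENNReal.mul_iSup]
  refine iSup_le fun s => ?_
  have hfilter : ∑ n ∈ s, (if t < |discQ a f n| then ENNReal.ofReal (w n) else 0)
      = ENNReal.ofReal (∑ n ∈ s.filter (fun n => t < |discQ a f n|), w n) := by
    rw [← Finset.sum_filter, ENNReal.ofReal_sum_of_nonneg (fun n _ => (hw n).le)]
  rw [hfilter, ← ENNReal.ofReal_mul ht.le]
  apply ENNReal.ofReal_le_ofReal
  set s' := s.filter (fun n => t < |discQ a f n|) with hs'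
  rcases s'.eq_empty_or_nonempty with he | hne
  · rw [he, Finset.sum_empty, mul_zero]
    exact mul_nonneg (by positivity) hFnn
  · set N := s'.max' hne with hN
    have hNmem : N ∈ s' := s'.max'_mem hne
    have hNlt : t < |discQ a f N| := (Finset.mem_filter.mp hNmem).2
    have hsub : (∑ n ∈ s', w n) ≤ ∑ j ∈ Finset.Icc 0 N, w j := by
      apply Finset.sum_le_sum_of_subset_of_nonneg
      · intro n hn
        simp only [Finset.mem_Icc]
        exact ⟨Nat.zero_le n, s'.le_max' n hn⟩
      · intro j _ _; exact (hw j).le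
    calc t * ∑ n ∈ s', w n ≤ t * ∑ j ∈ Finset.Icc 0 N, w j :=
          mul_le_mul_of_nonneg_left hsub ht.le
      _ ≤ 2 * Λ * F := hkey N hNlt
end

section
/- Let w ∈ A_1(ℕ). Then there exists a constant C > 0, depending only on the A_1(ℕ) constant of w, such that for every f ∈ ℓ^1(ℕ,w), ∑_{n=0}^∞ O₂f(n) w(n) ≤ C ∑_{m=0}^∞ |f(m)| w(m); that is, the adjoint Hardy operator O₂ is bounded from ℓ^1(ℕ,w) into itself. -/
open MeasureTheory Real Filter

theorem adjoint_hardy_weighted_l1_bound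
    (Λ : ℝ) (hΛ : 0 < Λ) :
    ∃ C : ℝ, 0 < C ∧ ∀ w : ℕ → ℝ, (∀ n, 0 < w n) → A1ConstLE w Λ →
      ∀ f : ℕ → ℝ, Summable (fun m => |f m| * w m) →
        Summable (fun n => hardyO2 f n * w n) ∧
        ∑' n, hardyO2 f n * w n ≤ C * ∑' m, |f m| * w m := by
  refine ⟨Λ, hΛ, fun w hw hA f hf => ?_⟩
  -- The key pointwise weight estimate from A1: ∑_{j=0}^m w j ≤ Λ (m+1) w m
  have hS : ∀ m : ℕ, ∑ j ∈ Finset.Icc 0 m, w j ≤ Λ * ((m : ℝ) + 1) * w m := by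
    intro m
    have h := hA 0 m (Nat.zero_le m) m (Nat.zero_le m) le_rfl
    simp only [Nat.cast_zero, sub_zero] at h
    have hwm := hw m
    calc ∑ j ∈ Finset.Icc 0 m, w j
        = (∑ j ∈ Finset.Icc 0 m, w j) * (w m)⁻¹ * w m := by
          field_simp
      _ ≤ Λ * ((m : ℝ) + 1) * w m := by
          apply mul_le_mul_of_nonneg_right h hwm.le
  set F : ℕ × ℕ → ℝ := fun p =>
    (if p.1 ≤ p.2 then |f p.2| / ((p.2 : ℝ) + 1) else 0) * w p.1 with hF_def
  have hFnn : 0 ≤ F := by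
    intro p
    apply mul_nonneg _ (hw p.1).le
    split
    · positivity
    · exact le_rfl
  -- fibers over fixed m are finitely supported
  have hfib : ∀ m : ℕ, Summable fun n => F (n, m) := by
    intro m
    apply summable_of_ne_finset_zero (s := Finset.range (m + 1))
    intro n hn
    simp only [Finset.mem_range, Nat.lt_succ_iff, not_le] at hn
    simp [F, Nat.not_le_of_lt hn, hn.not_ge]
  -- value of fiber sums
  have hfibval : ∀ m : ℕ, ∑' n, F (n, m)
      = |f m| / ((m : ℝ) + 1) * ∑ j ∈ Finset.Icc 0 m, w j := by
    intro m
    rw [tsum_eq_sum (s := Finset.range (m + 1))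
      (fun n hn => by
        simp only [Finset.mem_range, Nat.lt_succ_iff, not_le] at hn
        simp [F, hn.not_ge])]
    rw [Nat.range_eq_Icc_zero_sub_one (m + 1) (Nat.succ_ne_zero m)]
    simp only [Nat.succ_sub_one]
    rw [Finset.mul_sum]
    apply Finset.sum_congr rfl
    intro j hj
    simp only [Finset.mem_Icc] at hj
    simp [F, hj.2]
  have hfibbound : ∀ m : ℕ, ∑' n, F (n, m) ≤ Λ * (|f m| * w m) := by
    intro m
    rw [hfibval m]
    have h1 : (0:ℝ) ≤ |f m| / ((m : ℝ) + 1) := by positivity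
    calc |f m| / ((m : ℝ) + 1) * ∑ j ∈ Finset.Icc 0 m, w j
        ≤ |f m| / ((m : ℝ) + 1) * (Λ * ((m : ℝ) + 1) * w m) :=
          mul_le_mul_of_nonneg_left (hS m) h1
      _ = Λ * (|f m| * w m) := by
          have : ((m : ℝ) + 1) ≠ 0 := by positivity
          field_simp
  have houter : Summable fun m => ∑' n, F (n, m) := by
    apply Summable.of_nonneg_of_le (fun m => tsum_nonneg fun n => hFnn (n, m))
      hfibbound (hf.mul_left Λ)
  -- summability of the swapped function, then of F
  have hF' : Summable fun p : ℕ × ℕ => F (p.2, p.1) := by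
    apply (summable_prod_of_nonneg (fun p => hFnn (p.2, p.1))).mpr
    exact ⟨hfib, houter⟩
  have hF : Summable F := ((Equiv.prodComm ℕ ℕ).summable_iff).mp (by
    exact hF')
  -- hardyO2 f n * w n = ∑' m, F (n, m)
  have hrow : ∀ n : ℕ, hardyO2 f n * w n = ∑' m, F (n, m) := by
    intro n
    rw [hardyO2, ← tsum_mul_right]
  obtain ⟨hfib2, houter2⟩ := (summable_prod_of_nonneg hFnn).mp hF
  constructor
  · exact houter2.congr fun n => (hrow n).symm
  · calc ∑' n, hardyO2 f n * w n = ∑' n, ∑' m, F (n, m) := by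
          exact tsum_congr hrow
      _ = ∑' p : ℕ × ℕ, F p := (Summable.tsum_prod hF).symm
      _ = ∑' m, ∑' n, F (n, m) := by
          rw [Summable.tsum_prod hF]
          exact (Summable.tsum_comm (f := fun n m => F (n, m)) hF).symm
      _ ≤ ∑' m, Λ * (|f m| * w m) :=
          Summable.tsum_le_tsum hfibbound houter (hf.mul_left Λ)
      _ = Λ * ∑' m, |f m| * w m := tsum_mul_left
end
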